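/- Let G_< be a semi-comparability graph, and for each vertex v let f(v) be the size of the largest clique whose <-minimal element is v. Then for each i, the set V_i = {v : f(v) = i} induces a subgraph of G that is a comparability graph of a partial order; more precisely, there are no three vertices a<b<c in V_i with ab, bc edges and ac a non-edge. -/
import Mathlib


/-- In a semi-comparability graph, if `f v` is the size of the largest
clique whose `<`-minimal element is `v`, then each level set `{v | f v = i}` induces
a comparability graph: there are no `a < b < c` in the level set with `ab, bc` edges
and `ac` a non-edge. -/
theorem semiComparability_levels_comparability {V : Type*} [Fintype V] [LinearOrder V]
    (G : SimpleGraph V)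
    (hsemi : ∀ a b c d : V, a < b → b < c → c < d →
      G.Adj a b → G.Adj b c → G.Adj c d → ¬ G.Adj a c → ¬ G.Adj b d → False)
    (f : V → ℕ)
    (hf : ∀ v, f v = sSup {n : ℕ | ∃ s : Finset V,
      G.IsNClique n s ∧ v ∈ s ∧ ∀ u ∈ s, v ≤ u}) :
    ∀ (i : ℕ) (a b c : V), f a = i → f b = i → f c = i → a < b → b < c →
      G.Adj a b → G.Adj b c → ¬ G.Adj a c → False := by
  intro i a b c hfa hfb hfc hab hbc Hab Hbc Hac
  have bdd : ∀ v : V, BddAbove {n : ℕ | ∃ s : Finset V,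
      G.IsNClique n s ∧ v ∈ s ∧ ∀ u ∈ s, v ≤ u} := by
    intro v
    refine ⟨Fintype.card V, ?_⟩
    rintro n ⟨s, hs, -, -⟩
    rw [← hs.card_eq]
    exact s.card_le_univ.trans (by simp)
  have hne : ∀ v : V, ({n : ℕ | ∃ s : Finset V,
      G.IsNClique n s ∧ v ∈ s ∧ ∀ u ∈ s, v ≤ u}).Nonempty := by
    intro v
    refine ⟨1, {v}, ?_, by simp, by simp⟩
    constructor
    · simp [SimpleGraph.IsClique]
    · simp
  -- obtain a maximum clique with minimal element c
  have hmem : i ∈ {n : ℕ | ∃ s : Finset V,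
      G.IsNClique n s ∧ c ∈ s ∧ ∀ u ∈ s, c ≤ u} := by
    rw [← hfc, hf c]
    exact Nat.sSup_mem (hne c) (bdd c)
  obtain ⟨S, hS, hcS, hSmin⟩ := hmem
  -- b is adjacent to every element of S
  have hbS : ∀ d ∈ S, G.Adj b d := by
    intro d hd
    rcases eq_or_lt_of_le (hSmin d hd) with h | h
    · exact h ▸ Hbc
    · by_contra hbd
      exact hsemi a b c d hab hbc h Hab Hbc (hS.1 hcS hd (ne_of_lt h)) Hac hbd
  have hbnS : b ∉ S := fun h => absurd (hSmin b h) (not_le.mpr hbc)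
  -- insert b into S to get a larger clique with minimal element b
  have hmem2 : (i + 1) ∈ {n : ℕ | ∃ s : Finset V,
      G.IsNClique n s ∧ b ∈ s ∧ ∀ u ∈ s, b ≤ u} := by
    refine ⟨insert b S, ⟨?_, ?_⟩, Finset.mem_insert_self _ _, ?_⟩
    · intro x hx y hy hxy
      simp only [Finset.coe_insert, Set.mem_insert_iff, Finset.mem_coe] at hx hy
      rcases hx with rfl | hx <;> rcases hy with rfl | hy
      · exact absurd rfl hxy
      · exact hbS y hy
      · exact (hbS x hx).symm
      · exact hS.1 hx hy hxy
    · rw [Finset.card_insert_of_notMem hbnS, hS.card_eq]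
    · intro u hu
      rcases Finset.mem_insert.mp hu with rfl | hu
      · exact le_refl u
      · exact le_of_lt (lt_of_lt_of_le hbc (hSmin u hu))
  have h2 := le_csSup (bdd b) hmem2
  rw [← hf b, hfb] at h2
  omega
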